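/- Let π be a noncrossing matching of size n and let 2 ≤ j ≤ 2n−2. Then every σ ∈ NC_n with e_j(σ) = π satisfies either π ↗_j σ or σ ≤ π; in other words, e_j^{−1}(π) ⊆ {σ : π ↗_j σ} ∪ {σ : σ ≤ π}. -/

import Mathlib

attribute [local instance] Classical.propDecidable

open MvPolynomial

/-! ### Noncrossing matchings -/

/-- `f` encodes a noncrossing perfect matching of the points `0, …, 2n-1`
(point `p` of the paper, which is 1-indexed, corresponds to index `p-1`):
`f` is a fixed-point-free involution and no two arches cross. -/
def IsNCMatching (n : ℕ) (f : Fin (2*n) → Fin (2*n)) : Prop :=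
  (∀ i, f (f i) = i) ∧ (∀ i, f i ≠ i) ∧
    ∀ i j : Fin (2*n), i < j → j < f i → f i < f j → False

/-- The type of noncrossing matchings of size `n`. -/
def NCM (n : ℕ) := {f : Fin (2*n) → Fin (2*n) // IsNCMatching n f}

noncomputable instance (n : ℕ) : Fintype (NCM n) := by
  unfold NCM; exact Fintype.ofFinite _

/-- The noncrossing matching `()_n` consisting of `n` nested arches. -/
def nestedNC (n : ℕ) : NCM n :=
  ⟨fun i => ⟨2*n - 1 - i.val, by have := i.isLt; omega⟩, by
    refine ⟨fun i => ?_, fun i => ?_, fun i j h1 h2 h3 => ?_⟩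
    · have := i.isLt
      apply Fin.ext
      show 2*n - 1 - (2*n - 1 - i.val) = i.val
      omega
    · have := i.isLt
      intro h
      have h' : 2*n - 1 - i.val = i.val := congrArg Fin.val h
      omega
    · have hi := i.isLt; have hj := j.isLt
      rw [Fin.lt_def] at h1 h2 h3
      have e2 : j.val < 2*n - 1 - i.val := h2
      have e3 : 2*n - 1 - i.val < 2*n - 1 - j.val := h3
      omega⟩

/-- The Temperley–Lieb operator `e_j` (with `j` the 1-indexed label of the paper,
acting on points `j`, `j+1`, cyclically identifying `2n+1` with `1`;
point `p` corresponds to index `p-1`). -/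
def TLe (m : ℕ) (j : ℕ) (f : Fin m → Fin m) : Fin m → Fin m :=
  fun i =>
    let a : Fin m := ⟨(j - 1) % m, Nat.mod_lt _ i.pos⟩
    let b : Fin m := ⟨j % m, Nat.mod_lt _ i.pos⟩
    if i = a then b else if i = b then a
    else if f i = a then f b else if f i = b then f a else f i

/-- Concatenation `σπ` of two matchings (as functions on points). -/
def concatF (n n' : ℕ) (f : Fin (2*n) → Fin (2*n)) (g : Fin (2*n') → Fin (2*n')) :
    Fin (2*(n+n')) → Fin (2*(n+n')) := fun i =>
  if h : i.val < 2*n then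
    ⟨(f ⟨i.val, h⟩).val, by have := (f ⟨i.val, h⟩).isLt; omega⟩
  else
    ⟨2*n + (g ⟨i.val - 2*n, by have := i.isLt; omega⟩).val,
      by have := (g ⟨i.val - 2*n, by have := i.isLt; omega⟩).isLt; omega⟩

/-- `(π)_m`: the matching `π` (of size `n`) surrounded by `m` nested arches. -/
def nestF (n m : ℕ) (f : Fin (2*n) → Fin (2*n)) :
    Fin (2*(n+m)) → Fin (2*(n+m)) := fun i =>
  if h : i.val < m ∨ 2*n + m ≤ i.val then
    ⟨2*(n+m) - 1 - i.val, by have := i.isLt; omega⟩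
  else
    ⟨m + (f ⟨i.val - m, by have := i.isLt; omega⟩).val,
      by have := (f ⟨i.val - m, by have := i.isLt; omega⟩).isLt; omega⟩

/-- Rotation `ρ` : `i` and `j` are matched in `ρ(π)` iff `i-1` and `j-1` are matched in `π`. -/
def rotF (m : ℕ) (f : Fin m → Fin m) : Fin m → Fin m := fun i =>
  ⟨((f ⟨(i.val + (m - 1)) % m, Nat.mod_lt _ i.pos⟩).val + 1) % m, Nat.mod_lt _ i.pos⟩

/-- The length of the `i`-th row (0-indexed, from the top) of the Young diagram `λ(π)`:
if `v_0 < … < v_{n-1}` are the (0-indexed) positions of the left endpoints of the arches,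
then the `i`-th row from the top has `v_{n-1-i} - (n-1-i)` boxes. -/
noncomputable def lamRowF (n : ℕ) (f : Fin (2*n) → Fin (2*n)) (i : ℕ) : ℕ :=
  if i < n then
    (((Finset.univ.filter fun j : Fin (2*n) => j < f j).sort (· ≤ ·)).map Fin.val).getD
        (n - 1 - i) 0 - (n - 1 - i)
  else 0

/-- `|λ(π)|`, the number of boxes of the Young diagram of `π`. -/
noncomputable def numBoxes (n : ℕ) (f : Fin (2*n) → Fin (2*n)) : ℕ :=
  ∑ i ∈ Finset.range n, lamRowF n f i

/-- `σ ≤ π`, i.e. `λ(σ)` is contained in `λ(π)`. -/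
noncomputable def LamLe (n : ℕ) (f g : Fin (2*n) → Fin (2*n)) : Prop :=
  ∀ i, lamRowF n f i ≤ lamRowF n g i

/-- `σ < π`, i.e. `λ(σ)` is strictly contained in `λ(π)`. -/
noncomputable def LamLt (n : ℕ) (f g : Fin (2*n) → Fin (2*n)) : Prop :=
  LamLe n f g ∧ ∃ i, lamRowF n f i < lamRowF n g i

/-- `σ ↗_j π` : `λ(π)` is obtained from `λ(σ)` by adding one box on the `j`-th diagonal
(the box in 0-indexed row `r` and 0-indexed column `c` lies on diagonal `n + c - r`,
matching the paper's 1-indexed `n + c - i`). -/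
noncomputable def UpArrow (n : ℕ) (f g : Fin (2*n) → Fin (2*n)) (j : ℕ) : Prop :=
  ∃ r, r < n ∧ lamRowF n g r = lamRowF n f r + 1 ∧
    (∀ i, i ≠ r → lamRowF n g i = lamRowF n f i) ∧
    n + lamRowF n f r - r = j

/-- The number of boxes of `λ(π)` lying on the `d`-th diagonal. -/
noncomputable def boxesOnDiag (n : ℕ) (f : Fin (2*n) → Fin (2*n)) (d : ℕ) : ℕ :=
  ((Finset.range n ×ˢ Finset.range n).filter
    (fun rc => rc.2 < lamRowF n f rc.1 ∧ n + rc.2 - rc.1 = d)).card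

/-- The cells `(row, column)` (0-indexed) of the Young diagram `λ(π)`. -/
noncomputable def cellsF (n : ℕ) (f : Fin (2*n) → Fin (2*n)) : Finset (ℕ × ℕ) :=
  (Finset.range n ×ˢ Finset.range n).filter fun rc => rc.2 < lamRowF n f rc.1

/-- `f_{λ(π)}`: the number of standard Young tableaux of shape `λ(π)`, i.e. of
bijective fillings of the cells with `0, …, |λ|-1` strictly increasing along
rows and down columns. -/
noncomputable def numSYT (n : ℕ) (f : Fin (2*n) → Fin (2*n)) : ℕ :=
  Nat.card {T : {c : ℕ × ℕ // c ∈ cellsF n f} ≃ Fin (cellsF n f).card //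
    (∀ a b : {c : ℕ × ℕ // c ∈ cellsF n f}, a.1.1 = b.1.1 → a.1.2 < b.1.2 → T a < T b) ∧
    (∀ a b : {c : ℕ × ℕ // c ∈ cellsF n f}, a.1.2 = b.1.2 → a.1.1 < b.1.1 → T a < T b)}

/-! ### Fully packed loops -/

/-- The vertices relevant for an FPL of size `n`: the `n × n` grid vertices
(`(column, row)`, 0-indexed, row 0 at the top) together with the `4n` external
edge endpoints, indexed counterclockwise starting with the topmost on the left side. -/
def FVert (n : ℕ) := (Fin n × Fin n) ⊕ (Fin (4*n))

/-- The grid vertex to which the `t`-th external edge is attached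
(`t` counted counterclockwise: down the left side, then along the bottom,
up the right side, and along the top). -/
def extVert {n : ℕ} (t : Fin (4*n)) : Fin n × Fin n :=
  if h1 : t.val < n then (⟨0, by omega⟩, ⟨t.val, h1⟩)
  else if h2 : t.val < 2*n then (⟨t.val - n, by omega⟩, ⟨n - 1, by omega⟩)
  else if h3 : t.val < 3*n then (⟨n - 1, by omega⟩, ⟨n - 1 - (t.val - 2*n), by omega⟩)
  else (⟨n - 1 - (t.val - 3*n), by have := t.isLt; omega⟩, ⟨0, by have := t.isLt; omega⟩)

/-- Adjacency in the `n × n` grid graph. -/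
def gridAdj {n : ℕ} (u v : Fin n × Fin n) : Prop :=
  (u.1 = v.1 ∧ (u.2.val + 1 = v.2.val ∨ v.2.val + 1 = u.2.val)) ∨
  (u.2 = v.2 ∧ (u.1.val + 1 = v.1.val ∨ v.1.val + 1 = u.1.val))

/-- Adjacency in the `n × n` grid together with all `4n` external edges. -/
def fullAdj {n : ℕ} : FVert n → FVert n → Prop
  | Sum.inl u, Sum.inl v => gridAdj u v
  | Sum.inl u, Sum.inr t => u = extVert t
  | Sum.inr t, Sum.inl u => u = extVert t
  | Sum.inr _, Sum.inr _ => False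

/-- A fully packed loop configuration of size `n`: a subgraph of the grid with
external edges in which every grid vertex has degree `2` and which contains
exactly every other external edge, beginning with the topmost at the left side. -/
structure FPL (n : ℕ) where
  adj : FVert n → FVert n → Prop
  symm : ∀ u v, adj u v → adj v u
  sub : ∀ u v, adj u v → fullAdj u v
  degGrid : ∀ u : Fin n × Fin n, {v | adj (Sum.inl u) v}.ncard = 2
  degExtEven : ∀ t : Fin (4*n), t.val % 2 = 0 → {v | adj (Sum.inr t) v}.ncard = 1
  degExtOdd : ∀ t : Fin (4*n), t.val % 2 = 1 → {v | adj (Sum.inr t) v}.ncard = 0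

/-- `F` has link pattern `f` : the chosen external edges, numbered counterclockwise by
`Fin (2n)` (the `k`-th chosen one being the external edge at boundary position `2k`),
are matched in pairs by `f` according to connectivity in `F`. -/
def hasLinkPattern {n : ℕ} (F : FPL n) (f : Fin (2*n) → Fin (2*n)) : Prop :=
  ∀ k l : Fin (2*n), f k = l ↔ (k ≠ l ∧
    Relation.ReflTransGen F.adj
      (Sum.inr ⟨2*k.val, by have := k.isLt; omega⟩)
      (Sum.inr ⟨2*l.val, by have := l.isLt; omega⟩))

/-- `A_π`: the number of FPLs of size `n` with link pattern `π`. -/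
noncomputable def countFPL (n : ℕ) (f : Fin (2*n) → Fin (2*n)) : ℕ :=
  Nat.card {F : FPL n // hasLinkPattern F f}

/-! ### Wheel polynomials and the operators `S_k`, `D_k` -/

/-- The cyclic successor `k+1` on `Fin m`. -/
def cycS {m : ℕ} (i : Fin m) : Fin m := ⟨(i.val + 1) % m, Nat.mod_lt _ i.pos⟩

/-- `S_k`: the algebra automorphism exchanging the variables `z_k` and `z_{k+1}`
(cyclically, `z_{2n+1} := z_1`). -/
noncomputable def swapVar {F : Type*} [CommSemiring F] {N : ℕ} (k : Fin N)
    (f : MvPolynomial (Fin N) F) : MvPolynomial (Fin N) F :=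
  MvPolynomial.rename (Equiv.swap k (cycS k)) f

/-- `D` is the operator `D_k : f ↦ ((q z_k - q⁻¹ z_{k+1})/(z_{k+1} - z_k))·(S_k f - f)`,
characterized by `(z_{k+1} - z_k) · D f = (q z_k - q⁻¹ z_{k+1}) · (S_k f - f)`. -/
def IsDOp {F : Type*} [Field F] {N : ℕ} (q : F) (k : Fin N)
    (D : MvPolynomial (Fin N) F → MvPolynomial (Fin N) F) : Prop :=
  ∀ f, (X (cycS k) - X k) * D f = (C q * X k - C q⁻¹ * X (cycS k)) * (swapVar k f - f)

/-- A wheel polynomial of order `n`: homogeneous of degree `n(n-1)` and vanishing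
under every substitution `z_j := q² z_i`, `z_k := q⁴ z_i` with `i < j < k`. -/
def IsWheel {F : Type*} [Field F] (q : F) (n : ℕ) (p : MvPolynomial (Fin (2*n)) F) : Prop :=
  p.IsHomogeneous (n*(n-1)) ∧
  ∀ i j k : Fin (2*n), i < j → j < k →
    (MvPolynomial.aeval (fun t : Fin (2*n) =>
      if t = j then C (q^2) * X i else if t = k then C (q^4) * X i else X t)) p = 0

/-- The vector space `W_n[z]` of wheel polynomials of order `n`, as a submodule. -/
noncomputable def wheelSpace (F : Type*) [Field F] (q : F) (n : ℕ) :
    Submodule F (MvPolynomial (Fin (2*n)) F) :=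
  (homogeneousSubmodule (Fin (2*n)) F (n*(n-1))) ⊓
  ⨅ (i : Fin (2*n)) (j : Fin (2*n)) (k : Fin (2*n)) (_ : i < j) (_ : j < k),
    LinearMap.ker (MvPolynomial.aeval (R := F) (fun t : Fin (2*n) =>
      if t = j then C (q^2) * X i else if t = k then C (q^4) * X i else X t)).toLinearMap

/-- `Ψ_{()_n} = (q - q⁻¹)^{-n(n-1)} ∏_{1 ≤ i < j ≤ n} (q z_i - q⁻¹ z_j)(q z_{n+i} - q⁻¹ z_{n+j})`. -/
noncomputable def PsiEmpty {F : Type*} [Field F] (q : F) (n : ℕ) :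
    MvPolynomial (Fin (2*n)) F :=
  C (((q - q⁻¹)^(n*(n-1)))⁻¹) *
    ∏ ij ∈ Finset.univ.filter (fun ij : Fin n × Fin n => ij.1 < ij.2),
      ((C q * X ⟨ij.1.val, by have := ij.1.isLt; omega⟩ -
        C q⁻¹ * X ⟨ij.2.val, by have := ij.2.isLt; omega⟩) *
       (C q * X ⟨n + ij.1.val, by have := ij.1.isLt; omega⟩ -
        C q⁻¹ * X ⟨n + ij.2.val, by have := ij.2.isLt; omega⟩))

/-- The `Fin (2n)`-index of the operator `D_j` for the paper's (1-indexed, cyclic,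
`D_{j+2n} = D_j`) index `j`. -/
def finOfIdx (N : ℕ) (hN : 0 < N) (j : ℕ) : Fin N := ⟨(j - 1) % N, Nat.mod_lt _ hN⟩

/-- The list of `D`-operator indices for `D_π`: for each box of `λ(π)`, read row by row
from top to bottom and left to right within each row, the (0-indexed) index of the
diagonal `n + c - i` of that box. -/
def diagList1 (n : ℕ) (lam : ℕ → ℕ) : List (Fin (2*n)) :=
  (List.finRange n).flatMap fun i =>
    (List.range (lam i.val)).map fun c =>
      ⟨(n - 1 + c - i.val) % (2*n), Nat.mod_lt _ (by have := i.isLt; omega)⟩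

/-- The wheel polynomial `D_π`, obtained from `Ψ_{()_n}` by successively applying,
for each box of `λ(π)` read row by row from top to bottom and left to right,
the operator `D` indexed by the diagonal of that box. -/
noncomputable def DpiF {F : Type*} [Field F] (q : F) (n : ℕ)
    (D : Fin (2*n) → MvPolynomial (Fin (2*n)) F → MvPolynomial (Fin (2*n)) F)
    (f : Fin (2*n) → Fin (2*n)) : MvPolynomial (Fin (2*n)) F :=
  (diagList1 n (lamRowF n f)).foldl (fun p k => D k p) (PsiEmpty q n)

/-- Operator indices for the second stage of `D_{π₁,π₂}`: for each box of `λ(π₂)`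
(in reading order) the index of `D_{c-i}` (paper 1-indexed diagonal `c - i`, taken
mod `2n`). -/
def diagList2 (n rows : ℕ) (h : rows ≤ n) (lam : ℕ → ℕ) : List (Fin (2*n)) :=
  (List.finRange rows).flatMap fun i =>
    (List.range (lam i.val)).map fun c =>
      ⟨(((c : ℤ) - (i.val : ℤ) - 1) % ((2*n : ℕ) : ℤ)).toNat, by
        have hi := i.isLt
        have h2 : (0:ℤ) < ((2*n : ℕ) : ℤ) := by exact_mod_cast (show (0:ℕ) < 2*n by omega)
        have h3 := Int.emod_nonneg ((c : ℤ) - (i.val : ℤ) - 1) (ne_of_gt h2)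
        have h4 := Int.emod_lt_of_pos ((c : ℤ) - (i.val : ℤ) - 1) h2
        omega⟩

/-- The wheel polynomial `D_{π₁,π₂}` (with `π₁` of size `n₁`, `π₂` of size `n₂`):
starting from `D_{(π₁)_{n₂}}`, apply for each box of `λ(π₂)`, read row by row from top
to bottom and left to right, the operator `D` indexed (cyclically) by `c - i`. -/
noncomputable def DpiPair {F : Type*} [Field F] (q : F) (n1 n2 : ℕ)
    (D : Fin (2*(n1+n2)) → MvPolynomial (Fin (2*(n1+n2))) F → MvPolynomial (Fin (2*(n1+n2))) F)
    (f1 : Fin (2*n1) → Fin (2*n1)) (f2 : Fin (2*n2) → Fin (2*n2)) :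
    MvPolynomial (Fin (2*(n1+n2))) F :=
  (diagList2 (n1+n2) n2 (by omega) (lamRowF n2 f2)).foldl (fun p k => D k p)
    (DpiF q (n1+n2) D (nestF n1 n2 f1))

/-- `Psi` is the family `(Ψ_π)_{π ∈ NC_n}`: it starts with `Ψ_{()_n}` and satisfies the
recursion `Ψ_π = D_j(Ψ_σ) - Σ_{τ ∈ e_j⁻¹(σ), τ ∉ {σ,π}} Ψ_τ` whenever `σ ↗_j π`. -/
noncomputable def IsPsiFamily {F : Type*} [Field F] (q : F) (n : ℕ)
    (D : Fin (2*n) → MvPolynomial (Fin (2*n)) F → MvPolynomial (Fin (2*n)) F)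
    (Psi : NCM n → MvPolynomial (Fin (2*n)) F) : Prop :=
  Psi (nestedNC n) = PsiEmpty q n ∧
  ∀ (hn : 0 < n) (j : ℕ) (σ π : NCM n), UpArrow n σ.1 π.1 j →
    Psi π = D (finOfIdx (2*n) (by omega) j) (Psi σ) -
      ∑ τ : NCM n, if TLe (2*n) j τ.1 = σ.1 ∧ τ ≠ σ ∧ τ ≠ π then Psi τ else 0

/-! ### The polynomials `f(i,j)`, `g(i)`, `h(i)` and `P(α|β|γ)` -/

noncomputable def fP {F : Type*} [Field F] (q : F) {N : ℕ} (i j : Fin N) :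
    MvPolynomial (Fin N) F :=
  C (q - q⁻¹)⁻¹ * (C q * X i - C q⁻¹ * X j)

noncomputable def gP {F : Type*} [Field F] (q : F) {N : ℕ} (i : Fin N) :
    MvPolynomial (Fin N) F :=
  C (q - q⁻¹)⁻¹ * (C q - C q⁻¹ * X i)

noncomputable def hP {F : Type*} [Field F] (q : F) {N : ℕ} (i : Fin N) :
    MvPolynomial (Fin N) F :=
  C (q - q⁻¹)⁻¹ * (C q * X i - C q⁻¹)

noncomputable def Pabg {F : Type*} [Field F] (q : F) (n : ℕ)
    (α : Fin (2*n) → Fin (2*n) → ℕ) (β γ : Fin (2*n) → ℕ) :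
    MvPolynomial (Fin (2*n)) F :=
  (∏ i : Fin (2*n), ∏ j : Fin (2*n), if i ≠ j then fP q i j ^ α i j else 1) *
  ∏ i : Fin (2*n), (gP q i ^ β i * hP q i ^ γ i)

/-- The indeterminate `q` of `ℚ(q)`. -/
noncomputable def qQ : RatFunc ℚ := RatFunc.X

/-- `q = e^{2πi/3} ∈ ℂ`. -/
noncomputable def qC : ℂ := Complex.exp (2 * (Real.pi : ℂ) * Complex.I / 3)



/-- strictly sorted nat list has `i ≤ l[i]` -/
lemma sorted_ge_idx (l : List ℕ) (hl : l.Pairwise (· < ·)) :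
    ∀ i (hi : i < l.length), i ≤ l[i] := by
  intro i
  induction i with
  | zero => intro _; exact Nat.zero_le _
  | succ k ih =>
    intro hi
    have hk : k < l.length := by omega
    have := List.pairwise_iff_getElem.mp hl k (k+1) hk hi (by omega)
    have := ih hk
    omega

lemma key_list : ∀ (l l' : List ℕ), l.Pairwise (· < ·) → l'.Pairwise (· < ·) →
    (∀ z : ℕ, (l'.filter (· ≤ z)).length ≤ (l.filter (· ≤ z)).length) →
    ∀ k, k < l.length → k < l'.length → l.getD k 0 ≤ l'.getD k 0 := by
  intro l
  induction l with
  | nil => intro l' _ _ _ k hk; simp at hk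
  | cons x t ih =>
    intro l' hs hs' hc k hk hk'
    match l' with
    | [] => simp at hk'
    | y :: t' =>
      have hxy : x ≤ y := by
        by_contra hlt
        push_neg at hlt
        have h1 := hc y
        have h2 : (List.filter (· ≤ y) (x :: t)).length = 0 := by
          rw [List.length_eq_zero_iff]
          rw [List.filter_eq_nil_iff]
          intro a ha
          rcases List.mem_cons.mp ha with rfl | ha
          · simp; omega
          · have := (List.pairwise_cons.mp hs).1 a ha
            simp; omega
        have h3 : y ∈ List.filter (· ≤ y) (y :: t') := by simp
        have h4 : 0 < (List.filter (· ≤ y) (y :: t')).length :=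
          List.length_pos_iff.mpr (by intro hnil; rw [hnil] at h3; simp at h3)
        omega
      match k with
      | 0 => simpa using hxy
      | k + 1 =>
        simp only [List.getD_cons_succ]
        apply ih t' (List.pairwise_cons.mp hs).2 (List.pairwise_cons.mp hs').2
        · intro z
          by_cases hz : y ≤ z
          · have hxz : x ≤ z := le_trans hxy hz
            have := hc z
            simp [List.filter_cons, hz, hxz] at this
            omega
          · have : (List.filter (· ≤ z) t').length = 0 := by
              rw [List.length_eq_zero_iff, List.filter_eq_nil_iff]
              intro a ha
              have := (List.pairwise_cons.mp hs').1 a ha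
              simp; omega
            omega
        · simpa using hk
        · simpa using hk'


lemma count_mono {m : ℕ} (S : Finset (Fin m)) (x y : Fin m) (hx : x ∈ S) (hy : y ∉ S)
    (hxy : x < y) (z : ℕ) :
    ((insert y (S.erase x)).filter (fun s => s.val ≤ z)).card ≤
      (S.filter (fun s => s.val ≤ z)).card := by
  classical
  rw [Finset.filter_insert, Finset.filter_erase]
  by_cases hz : y.val ≤ z
  · rw [if_pos hz]
    have hxz : x.val ≤ z := le_trans (le_of_lt hxy) hz
    have hxf : x ∈ S.filter (fun s => s.val ≤ z) := Finset.mem_filter.mpr ⟨hx, hxz⟩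
    have h1 : ((S.filter (fun s => s.val ≤ z)).erase x).card
        = (S.filter (fun s => s.val ≤ z)).card - 1 := Finset.card_erase_of_mem hxf
    have h2 : 1 ≤ (S.filter (fun s => s.val ≤ z)).card := Finset.card_pos.mpr ⟨x, hxf⟩
    calc (insert y ((S.filter (fun s => s.val ≤ z)).erase x)).card
        ≤ ((S.filter (fun s => s.val ≤ z)).erase x).card + 1 := Finset.card_insert_le _ _
      _ ≤ _ := by omega
  · rw [if_neg hz]
    calc ((S.filter (fun s => s.val ≤ z)).erase x).card
        ≤ (S.filter (fun s => s.val ≤ z)).card := Finset.card_erase_le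
  
lemma length_filter_sort {m : ℕ} (S : Finset (Fin m)) (z : ℕ) :
    (((S.sort (· ≤ ·)).map Fin.val).filter (· ≤ z)).length
      = (S.filter (fun s => s.val ≤ z)).card := by
  classical
  rw [List.filter_map]
  rw [List.length_map]
  have : (S.filter (fun s => s.val ≤ z)).card
      = Multiset.card (Multiset.filter (fun s => s.val ≤ z) S.val) := by
    simp [Finset.filter, Finset.card]
  rw [this, ← Finset.sort_eq S (· ≤ ·), Multiset.filter_coe, Multiset.coe_card]
  congr 1

lemma sort_replace {m : ℕ} (S : Finset (Fin m)) (x y : Fin m) (hx : x ∈ S) (hy : y ∉ S)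
    (hxy : y.val + 1 = x.val) :
    (insert y (S.erase x)).sort (· ≤ ·) = (S.sort (· ≤ ·)).map (fun t => if t = x then y else t) := by
  classical
  refine (fun hp hs => List.Perm.eq_of_pairwise' (r := (· ≤ ·)) (Finset.pairwise_sort _ _) hs hp) ?_ ?_
  · rw [← Multiset.coe_eq_coe]
    rw [Finset.sort_eq]
    have hyS : y ∉ S.erase x := fun hc => hy (Finset.mem_of_mem_erase hc)
    rw [Finset.insert_val_of_notMem hyS]
    rw [Finset.erase_val]
    have : (Multiset.map (fun t => if t = x then y else t) ↑(Finset.sort S (· ≤ ·)))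
        = y ::ₘ Multiset.erase S.val x := by
      rw [Finset.sort_eq]
      conv_lhs => rw [← Multiset.cons_erase (show x ∈ S.val from hx)]
      rw [Multiset.map_cons, if_pos rfl]
      congr 1
      have hnd : S.val.Nodup := S.nodup
      calc Multiset.map (fun t => if t = x then y else t) (S.val.erase x)
          = Multiset.map id (S.val.erase x) := by
            apply Multiset.map_congr rfl
            intro t ht
            have : t ≠ x := (hnd.mem_erase_iff.mp ht).1
            simp [this]
        _ = S.val.erase x := Multiset.map_id _
    rw [← this]
    exact (Multiset.map_coe _ _).symm
  · have hslt := (Finset.sortedLT_sort S).pairwise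
    rw [List.pairwise_iff_getElem]
    intro i k hi hk hik
    rw [List.length_map] at hi hk
    simp only [List.getElem_map]
    have hl : (Finset.sort S (· ≤ ·))[i] < (Finset.sort S (· ≤ ·))[k] :=
      List.pairwise_iff_getElem.mp hslt i k hi hk hik
    set u := (Finset.sort S (· ≤ ·))[i] with hu
    set v := (Finset.sort S (· ≤ ·))[k] with hv
    have h3 : u.val < v.val := hl
    by_cases h1 : u = x
    · rw [if_pos h1]
      have h2 : v ≠ x := by intro hc; rw [h1, ← hc] at hl; exact lt_irrefl _ hl
      rw [if_neg h2]
      have h4 : u.val = x.val := congrArg Fin.val h1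
      rw [Fin.le_def]; omega
    · rw [if_neg h1]
      by_cases h2 : v = x
      · rw [if_pos h2]
        have h4 : v.val = x.val := congrArg Fin.val h2
        rw [Fin.le_def]; omega
      · rw [if_neg h2]; exact le_of_lt hl
noncomputable def Sset (n : ℕ) (f : Fin (2*n) → Fin (2*n)) : Finset (Fin (2*n)) :=
  Finset.univ.filter fun j : Fin (2*n) => j < f j

example (n : ℕ) (f : Fin (2*n) → Fin (2*n)) (i : ℕ) : lamRowF n f i =
    (if i < n then (((Sset n f).sort (· ≤ ·)).map Fin.val).getD (n-1-i) 0 - (n-1-i) else 0) := rfl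

lemma card_left (n : ℕ) (f : Fin (2*n) → Fin (2*n)) (hinv : ∀ i, f (f i) = i)
    (hnf : ∀ i, f i ≠ i) : (Sset n f).card = n := by
  classical
  have hcompl : (Sset n f)ᶜ = (Sset n f).image f := by
    ext i
    simp only [Finset.mem_compl, Sset, Finset.mem_filter, Finset.mem_univ, true_and,
      Finset.mem_image]
    constructor
    · intro hi
      refine ⟨f i, ?_, hinv i⟩
      have h1 : f i ≠ i := hnf i
      have h2 : ¬ i < f i := hi
      rw [hinv]
      cases lt_or_gt_of_ne h1 with
      | inl h => exact h
      | inr h => exact absurd h h2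
    · rintro ⟨x, hx, rfl⟩
      rw [hinv]
      exact not_lt_of_gt hx
  have hinj : Set.InjOn f (Sset n f) := by
    intro x _ y _ hxy
    have := congrArg f hxy
    rwa [hinv, hinv] at this
  have h1 : (Sset n f)ᶜ.card = (Sset n f).card := by
    rw [hcompl, Finset.card_image_of_injOn hinj]
  have h2 := Finset.card_compl_add_card (Sset n f)
  have h3 : Fintype.card (Fin (2*n)) = 2*n := by simp
  omega

lemma LL_sorted (n : ℕ) (f : Fin (2*n) → Fin (2*n)) :
    (((Sset n f).sort (· ≤ ·)).map Fin.val).Pairwise (· < ·) := by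
  rw [List.pairwise_map]
  exact (Finset.sortedLT_sort _).pairwise.imp (fun h => h)

lemma LL_length (n : ℕ) (f : Fin (2*n) → Fin (2*n)) :
    (((Sset n f).sort (· ≤ ·)).map Fin.val).length = (Sset n f).card := by
  rw [List.length_map, Finset.length_sort]

lemma lamle_of_insert_erase (n : ℕ) (f g : Fin (2*n) → Fin (2*n)) (x y : Fin (2*n))
    (hx : x ∈ Sset n f) (hy : y ∉ Sset n f) (hxy : x < y)
    (hS : Sset n g = insert y ((Sset n f).erase x))
    (hcard : (Sset n f).card = n) : LamLe n f g := by
  classical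
  have hyE : y ∉ (Sset n f).erase x := fun hc => hy (Finset.mem_of_mem_erase hc)
  have hcardg : (Sset n g).card = n := by
    have h1 : 1 ≤ (Sset n f).card := Finset.card_pos.mpr ⟨x, hx⟩
    rw [hS, Finset.card_insert_of_notMem hyE, Finset.card_erase_of_mem hx, hcard]
    rw [hcard] at h1
    omega
  intro i
  show (if i < n then _ else 0) ≤ (if i < n then _ else 0)
  by_cases hi : i < n
  · rw [if_pos hi, if_pos hi]
    apply Nat.sub_le_sub_right
    apply key_list _ _ (LL_sorted n f) (LL_sorted n g)
    · intro z
      rw [length_filter_sort, length_filter_sort, hS]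
      exact count_mono _ x y hx hy hxy z
    · rw [LL_length, hcard]; omega
    · rw [LL_length, hcardg]; omega
  · rw [if_neg hi, if_neg hi]

lemma getD_map_val {m : ℕ} (l : List (Fin m)) (k : ℕ) (hk : k < l.length) (d : ℕ) :
    (l.map Fin.val).getD k d = (l[k]).val := by
  rw [List.getD_eq_getElem _ _ (by simpa using hk), List.getElem_map]

lemma uparrow_of (n : ℕ) (f g : Fin (2*n) → Fin (2*n)) (x y : Fin (2*n))
    (hx : x ∈ Sset n f) (hy : y ∉ Sset n f) (hxy : y.val + 1 = x.val) (hx2 : 1 ≤ x.val)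
    (hS : Sset n g = insert y ((Sset n f).erase x))
    (hcard : (Sset n f).card = n) : UpArrow n g f x.val := by
  classical
  have hlen : ((Sset n f).sort (· ≤ ·)).length = n := by rw [Finset.length_sort, hcard]
  set l := (Sset n f).sort (· ≤ ·)
  have hnd : l.Nodup := Finset.sort_nodup _ _
  have hsl : (l.map Fin.val).Pairwise (· < ·) := LL_sorted n f
  have hxl : x ∈ l := (Finset.mem_sort _).mpr hx
  obtain ⟨k₀, hk₀, hbk⟩ := List.mem_iff_getElem.mp hxl
  have hk₀n : k₀ < n := by omega
  have hrepl : (Sset n g).sort (· ≤ ·) = l.map (fun t => if t = x then y else t) := by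
    rw [hS]; exact sort_replace _ x y hx hy hxy
  have hMget : ∀ k, (hk : k < n) → ((l.map Fin.val).getD k 0) = (l[k]'(by omega)).val :=
    fun k hk => getD_map_val l k (by omega) 0
  have hM'get : ∀ k, (hk : k < n) → (((Sset n g).sort (· ≤ ·)).map Fin.val).getD k 0
      = (if l[k]'(by omega) = x then y else l[k]'(by omega)).val := by
    intro k hk
    rw [hrepl]
    rw [getD_map_val _ k (by rw [List.length_map]; omega) 0]
    rw [List.getElem_map]
  have hge : ∀ i, (hi : i < n) → i ≤ (l[i]'(by omega)).val := by
    intro i hi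
    have := sorted_ge_idx (l.map Fin.val) hsl i (by rw [List.length_map]; omega)
    simpa using this
  have hk₀x : k₀ + 1 ≤ x.val := by
    have h1 : k₀ ≤ x.val := by have := hge k₀ hk₀n; rwa [hbk] at this
    rcases Nat.lt_or_ge k₀ x.val with hcase | hcase
    · omega
    · exfalso
      have hk0 : x.val = k₀ := by omega
      have hk₀1 : 1 ≤ k₀ := by omega
      have hlt : (l[k₀-1]'(by omega)).val < (l[k₀]'(by omega)).val := by
        have := List.pairwise_iff_getElem.mp hsl (k₀-1) k₀
          (by rw [List.length_map]; omega) (by rw [List.length_map]; omega) (by omega)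
        simpa using this
      have hge1 := hge (k₀-1) (by omega)
      have hyval : (l[k₀-1]'(by omega)).val = y.val := by
        have hxv : (l[k₀]'(by omega)).val = x.val := congrArg Fin.val hbk
        omega
      have hyl : l[k₀-1]'(by omega) = y := Fin.ext hyval
      apply hy
      have : y ∈ l := hyl ▸ List.getElem_mem _
      rwa [Finset.mem_sort] at this
  set r := n - 1 - k₀ with hr
  have hnr : n - 1 - r = k₀ := by omega
  have hval : ∀ i, i < n → lamRowF n f i = ((l.map Fin.val).getD (n-1-i) 0) - (n-1-i) := by
    intro i hi
    show (if i < n then ((l.map Fin.val).getD (n-1-i) 0) - (n-1-i) else 0) = _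
    rw [if_pos hi]
  have hvalg : ∀ i, i < n →
      lamRowF n g i = ((((Sset n g).sort (· ≤ ·)).map Fin.val).getD (n-1-i) 0) - (n-1-i) := by
    intro i hi
    show (if i < n then ((((Sset n g).sort (· ≤ ·)).map Fin.val).getD (n-1-i) 0) - (n-1-i) else 0) = _
    rw [if_pos hi]
  have hxvv : (l[k₀]'(by omega)).val = x.val := congrArg Fin.val hbk
  refine ⟨r, by omega, ?_, ?_, ?_⟩
  · rw [hval r (by omega), hvalg r (by omega), hnr, hMget k₀ hk₀n, hM'get k₀ hk₀n,
      if_pos hbk]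
    omega
  · intro i hir
    by_cases hi : i < n
    · rw [hval i hi, hvalg i hi, hMget (n-1-i) (by omega), hM'get (n-1-i) (by omega)]
      have hne : n - 1 - i ≠ k₀ := by omega
      have : l[n-1-i]'(by omega) ≠ x := by
        intro hc
        rw [← hbk] at hc
        exact hne ((List.Nodup.getElem_inj_iff hnd).mp hc)
      rw [if_neg this]
    · show (if i < n then _ else 0) = (if i < n then _ else 0)
      rw [if_neg hi, if_neg hi]
  · rw [hvalg r (by omega), hnr, hM'get k₀ hk₀n, if_pos hbk]
    omega
lemma mem_Sset {n : ℕ} (f : Fin (2*n) → Fin (2*n)) (i : Fin (2*n)) :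
    i ∈ Sset n f ↔ i < f i := by simp [Sset]


theorem stmt2 (n : ℕ) (j : ℕ) (hj1 : 2 ≤ j) (hj2 : j ≤ 2*n - 2)
    (π σ : NCM n) (h : TLe (2*n) j σ.1 = π.1) :
    UpArrow n π.1 σ.1 j ∨ LamLe n σ.1 π.1 := by
  have hn : 2 ≤ n := by omega
  obtain ⟨hinv, hnf, hncr⟩ := σ.2
  have hja : j - 1 < 2*n := by omega
  have hjb : j < 2*n := by omega
  set a : Fin (2*n) := ⟨j-1, hja⟩ with haa
  set b : Fin (2*n) := ⟨j, hjb⟩ with hbb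
  have haval : a.val = j - 1 := rfl
  have hbval : b.val = j := rfl
  have hab : a < b := by rw [Fin.lt_def]; omega
  have hba : b ≠ a := Fin.ne_of_val_ne (by omega)
  have hcard := card_left n σ.1 hinv hnf
  have hTL : TLe (2*n) j σ.1 = fun i => if i = a then b
      else if i = b then a
      else if σ.1 i = a then σ.1 b
      else if σ.1 i = b then σ.1 a else σ.1 i := by
    funext i
    simp only [TLe, Nat.mod_eq_of_lt (show j - 1 < 2*n by omega),
      Nat.mod_eq_of_lt (show j < 2*n by omega), haa, hbb]
  rw [hTL] at h
  set G : Fin (2*n) → Fin (2*n) := fun i => if i = a then b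
      else if i = b then a
      else if σ.1 i = a then σ.1 b
      else if σ.1 i = b then σ.1 a else σ.1 i with hG
  have hfaa : σ.1 a ≠ a := hnf a
  have hfbb : σ.1 b ≠ b := hnf b
  by_cases hfa : σ.1 a = b
  · -- the little arch (a,b) is in σ, so π = σ
    have hfb : σ.1 b = a := by rw [← hfa, hinv]
    have hgf : π.1 = σ.1 := by
      rw [← h]
      funext i
      by_cases h1 : i = a
      · subst h1; simp [hG, hfa]
      · by_cases h2 : i = b
        · subst h2; simp [hG, h1, hfb]
        · have h3 : σ.1 i ≠ a := by
            intro hc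
            have := congrArg σ.1 hc; rw [hinv, hfa] at this; exact h2 this
          have h4 : σ.1 i ≠ b := by
            intro hc
            have := congrArg σ.1 hc; rw [hinv, hfb] at this; exact h1 this
          simp [hG, h1, h2, h3, h4]
    right; rw [hgf]; intro i; exact le_rfl
  · have hfb : σ.1 b ≠ a := by
      intro hc; apply hfa; rw [← hc, hinv]
    have hGa : G a = b := by simp [hG]
    have hGb : G b = a := by simp [hG, hba]
    have hGfa : G (σ.1 a) = σ.1 b := by
      simp [hG, hfaa, hfa, hinv]
    have hGfb : G (σ.1 b) = σ.1 a := by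
      simp [hG, hfb, hfbb, hinv, hba]
    have hGi : ∀ i, i ≠ a → i ≠ b → i ≠ σ.1 a → i ≠ σ.1 b → G i = σ.1 i := by
      intro i h1 h2 h3 h4
      have h3' : σ.1 i ≠ a := by
        intro hc; have := congrArg σ.1 hc; rw [hinv] at this; exact h3 this
      have h4' : σ.1 i ≠ b := by
        intro hc; have := congrArg σ.1 hc; rw [hinv] at this; exact h4 this
      simp [hG, h1, h2, h3', h4']
    have hfafb : σ.1 a ≠ σ.1 b := by
      intro hc
      have := congrArg σ.1 hc; rw [hinv, hinv] at this; exact hba this.symm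
    rcases lt_or_gt_of_ne hfaa with hA | hA
    · rcases lt_or_gt_of_ne hfbb with hB | hB
      · -- EE : σ.1 a < a, σ.1 b < b
        have hBv : (σ.1 b).val < j := hB
        have hfbne : (σ.1 b).val ≠ j - 1 := fun hc => hfb (Fin.ext hc)
        have hfbfa : σ.1 b < σ.1 a := by
          rcases lt_or_gt_of_ne (Ne.symm hfafb) with hc | hc
          · exact hc
          · exfalso
            refine hncr (σ.1 a) (σ.1 b) hc ?_ ?_
            · rw [hinv, Fin.lt_def]; omega
            · rw [hinv, hinv]; exact hab
        have hSg : Sset n π.1 = insert a ((Sset n σ.1).erase (σ.1 a)) := by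
          apply Finset.ext
          intro i
          rw [mem_Sset, Finset.mem_insert, Finset.mem_erase, mem_Sset, ← h]
          by_cases h1 : i = a
          · subst h1; rw [hGa]
            exact ⟨fun _ => Or.inl rfl, fun _ => hab⟩
          · by_cases h2 : i = b
            · subst h2; rw [hGb]
              constructor
              · intro hc; exact absurd hc (asymm hab)
              · rintro (hc | ⟨_, hc⟩)
                · exact absurd hc hba
                · exact absurd hc (asymm hB)
            · by_cases h3 : i = σ.1 a
              · subst h3; rw [hGfa]
                constructor
                · intro hc; exact absurd hc (asymm hfbfa)
                · rintro (hc | ⟨hc, _⟩)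
                  · exact absurd hc hfaa
                  · exact absurd rfl hc
              · by_cases h4 : i = σ.1 b
                · subst h4; rw [hGfb, hinv]
                  exact ⟨fun _ => Or.inr ⟨Ne.symm hfafb, hB⟩, fun _ => hfbfa⟩
                · rw [hGi i h1 h2 h3 h4]
                  constructor
                  · intro hc; exact Or.inr ⟨h3, hc⟩
                  · rintro (hc | ⟨_, hc⟩)
                    · exact absurd hc h1
                    · exact hc
        right
        refine lamle_of_insert_erase n σ.1 π.1 (σ.1 a) a ?_ ?_ hA hSg hcard
        · rw [mem_Sset, hinv]; exact hA
        · rw [mem_Sset]; exact asymm hA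
      · -- EN : σ.1 a < a, b < σ.1 b : the box case
        have hAv : (σ.1 a).val < j - 1 := hA
        have hBv : j < (σ.1 b).val := hB
        have hSg : Sset n π.1 = insert a ((Sset n σ.1).erase b) := by
          apply Finset.ext
          intro i
          rw [mem_Sset, Finset.mem_insert, Finset.mem_erase, mem_Sset, ← h]
          by_cases h1 : i = a
          · subst h1; rw [hGa]
            exact ⟨fun _ => Or.inl rfl, fun _ => hab⟩
          · by_cases h2 : i = b
            · subst h2; rw [hGb]
              constructor
              · intro hc; exact absurd hc (asymm hab)
              · rintro (hc | ⟨hc, _⟩)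
                · exact absurd hc hba
                · exact absurd rfl hc
            · by_cases h3 : i = σ.1 a
              · subst h3; rw [hGfa]
                constructor
                · intro _; exact Or.inr ⟨hfa, by rw [hinv]; exact hA⟩
                · intro _; rw [Fin.lt_def]; omega
              · by_cases h4 : i = σ.1 b
                · subst h4; rw [hGfb]
                  constructor
                  · intro hc
                    exfalso
                    rw [Fin.lt_def] at hc
                    omega
                  · rintro (hc | ⟨_, hc⟩)
                    · exact absurd hc hfb
                    · rw [hinv] at hc; exact absurd hc (asymm hB)
                · rw [hGi i h1 h2 h3 h4]
                  constructor
                  · intro hc; exact Or.inr ⟨h2, hc⟩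
                  · rintro (hc | ⟨_, hc⟩)
                    · exact absurd hc h1
                    · exact hc
        left
        have hup := uparrow_of n σ.1 π.1 b a
          ((mem_Sset _ _).mpr hB)
          (by rw [mem_Sset]; exact asymm hA)
          (by rw [haval, hbval]; omega)
          (by rw [hbval]; omega)
          hSg hcard
        rw [hbval] at hup
        exact hup
    · rcases lt_or_gt_of_ne hfbb with hB | hB
      · -- NE : a < σ.1 a, σ.1 b < b : impossible
        exfalso
        have hv1 : (σ.1 b).val < j := hB
        have hv2 : (σ.1 b).val ≠ j - 1 := fun hc => hfb (Fin.ext hc)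
        have hv3 : j - 1 < (σ.1 a).val := hA
        have hv4 : (σ.1 a).val ≠ j := fun hc => hfa (Fin.ext hc)
        refine hncr (σ.1 b) a ?_ ?_ ?_
        · rw [Fin.lt_def]; omega
        · rw [hinv]; exact hab
        · rw [hinv, Fin.lt_def]; omega
      · -- NN : a < σ.1 a, b < σ.1 b
        have hv3 : j - 1 < (σ.1 a).val := hA
        have hv4 : (σ.1 a).val ≠ j := fun hc => hfa (Fin.ext hc)
        have hBv : j < (σ.1 b).val := hB
        have hfbfa : σ.1 b < σ.1 a := by
          rcases lt_or_gt_of_ne hfafb with hc | hc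
          · exfalso
            refine hncr a b hab ?_ hc
            rw [Fin.lt_def]; omega
          · exact hc
        have hSg : Sset n π.1 = insert (σ.1 b) ((Sset n σ.1).erase b) := by
          apply Finset.ext
          intro i
          rw [mem_Sset, Finset.mem_insert, Finset.mem_erase, mem_Sset, ← h]
          by_cases h1 : i = a
          · subst h1; rw [hGa]
            exact ⟨fun _ => Or.inr ⟨Ne.symm hba, hA⟩, fun _ => hab⟩
          · by_cases h2 : i = b
            · subst h2; rw [hGb]
              constructor
              · intro hc; exact absurd hc (asymm hab)
              · rintro (hc | ⟨hc, _⟩)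
                · exact absurd hc.symm hfbb
                · exact absurd rfl hc
            · by_cases h3 : i = σ.1 a
              · subst h3; rw [hGfa]
                constructor
                · intro hc; exact absurd hc (asymm hfbfa)
                · rintro (hc | ⟨_, hc⟩)
                  · exact absurd hc hfafb
                  · rw [hinv] at hc; exact absurd hc (asymm hA)
              · by_cases h4 : i = σ.1 b
                · subst h4; rw [hGfb]
                  exact ⟨fun _ => Or.inl rfl, fun _ => hfbfa⟩
                · rw [hGi i h1 h2 h3 h4]
                  constructor
                  · intro hc; exact Or.inr ⟨h2, hc⟩
                  · rintro (hc | ⟨_, hc⟩)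
                    · exact absurd hc h4
                    · exact hc
        right
        refine lamle_of_insert_erase n σ.1 π.1 b (σ.1 b) ((mem_Sset _ _).mpr hB) ?_ hB hSg hcard
        rw [mem_Sset, hinv]
        exact asymm hB
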